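/- Proposition 12 (L1/total-variation uncertainty class): Let d > 0 and let h0 ∈ A be a point with μ0({h0}) = 0. Then (i) every probability measure μ with D(μ0‖μ) ≤ d²/2 satisfies 2·TV(μ, μ0) ≤ d, and likewise every μ with D(μ‖μ0) ≤ d²/2 satisfies 2·TV(μ, μ0) ≤ d (Pinsker's inequality); consequently (ii) P₁ := sup{ μ(A) : 2·TV(μ,μ0) ≤ d } ≥ max( sup{ μ(A) : D(μ‖μ0) ≤ d²/2 }, sup{ μ(A) : D(μ0‖μ) ≤ d²/2 } ), and (iii) P₁ ≥ 1 − e^{−d²/2} + e^{−d²/2}·ε ≥ 1 − e^{−d²/2}, where ε = μ0(A). -/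

import Mathlib

open MeasureTheory Real Filter

open scoped Classical in
/-- Kullback–Leibler divergence `D(μ‖ν)` between measures, valued in `EReal`:
infinite unless `μ ≪ ν` and the log-likelihood ratio is `μ`-integrable. -/
noncomputable def klDiv {Ω : Type*} [MeasurableSpace Ω] (μ ν : Measure Ω) : EReal :=
  if μ ≪ ν ∧ Integrable (llr μ ν) μ then ((∫ ω, llr μ ν ω ∂μ : ℝ) : EReal) else ⊤

/-- Total variation distance `TV(μ,ν) = sup_A |μ(A) − ν(A)|` (so `2·TV` is the `L1`
distance between densities when they exist). -/
noncomputable def tvDist {Ω : Type*} [MeasurableSpace Ω] (μ ν : Measure Ω) : ℝ :=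
  ⨆ A : {A : Set Ω // MeasurableSet A}, |(μ A.1).toReal - (ν A.1).toReal|



private lemma phi_hasDeriv {x : ℝ} (hx : 0 < x) :
    HasDerivAt (fun y : ℝ => (y + 1) * Real.log y - 2 * (y - 1))
      (Real.log x + (x + 1) * x⁻¹ - 2) x := by
  have h1 : HasDerivAt (fun y : ℝ => (y + 1) * Real.log y)
      (1 * Real.log x + (x + 1) * x⁻¹) x :=
    (((hasDerivAt_id x).add_const 1)).mul (Real.hasDerivAt_log hx.ne')
  have h2 : HasDerivAt (fun y : ℝ => 2 * (y - 1)) 2 x := by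
    simpa using ((hasDerivAt_id x).sub_const 1).const_mul 2
  have := h1.sub h2
  refine this.congr_deriv ?_
  ring

private lemma phi_mono :
    MonotoneOn (fun y : ℝ => (y + 1) * Real.log y - 2 * (y - 1)) (Set.Ioi 0) := by
  apply monotoneOn_of_deriv_nonneg (convex_Ioi 0)
  · apply ContinuousOn.sub
    · exact ((continuousOn_id.add continuousOn_const).mul
        (Real.continuousOn_log.mono (fun x hx => ne_of_gt hx)))
    · exact continuousOn_const.mul (continuousOn_id.sub continuousOn_const)
  · intro x hx
    rw [interior_Ioi] at hx
    exact (phi_hasDeriv hx).differentiableAt.differentiableWithinAt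
  · intro x hx
    rw [interior_Ioi] at hx
    rw [(phi_hasDeriv hx).deriv]
    have hlog : 1 - x⁻¹ ≤ Real.log x := by
      have h := Real.log_le_sub_one_of_pos (inv_pos.mpr hx)
      rw [Real.log_inv] at h; linarith
    have hx' : (x + 1) * x⁻¹ = 1 + x⁻¹ := by rw [add_mul, one_mul, mul_inv_cancel₀ (ne_of_gt (Set.mem_Ioi.mp hx))]
    rw [hx']; linarith

private lemma phi_sign_ge {x : ℝ} (hx : 1 ≤ x) :
    0 ≤ (x + 1) * Real.log x - 2 * (x - 1) := by
  have := phi_mono (Set.mem_Ioi.mpr one_pos) (Set.mem_Ioi.mpr (lt_of_lt_of_le one_pos hx)) hx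
  simpa using this

private lemma phi_sign_le {x : ℝ} (hx0 : 0 < x) (hx : x ≤ 1) :
    (x + 1) * Real.log x - 2 * (x - 1) ≤ 0 := by
  have := phi_mono (Set.mem_Ioi.mpr hx0) (Set.mem_Ioi.mpr one_pos) hx
  simpa using this

private lemma g_hasDeriv {x : ℝ} (hx : 0 < x) :
    HasDerivAt (fun y : ℝ => (2 * y + 4) * (y * Real.log y - y + 1) - 3 * (y - 1) ^ 2)
      (4 * ((x + 1) * Real.log x - 2 * (x - 1))) x := by
  have h1 : HasDerivAt (fun y : ℝ => 2 * y + 4) 2 x := by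
    simpa using ((hasDerivAt_id x).const_mul 2).add_const 4
  have h2 : HasDerivAt (fun y : ℝ => y * Real.log y - y + 1) (Real.log x) x := by
    have h := Real.hasDerivAt_mul_log hx.ne'
    have := (h.sub (hasDerivAt_id x)).add_const 1
    refine this.congr_deriv ?_
    simp
  have h3 := h1.mul h2
  have h4 : HasDerivAt (fun y : ℝ => 3 * (y - 1) ^ 2) (3 * (2 * (x - 1))) x := by
    have h : HasDerivAt (fun y : ℝ => (y - 1) ^ 2) (2 * (x - 1)) x := by
      have := ((hasDerivAt_id x).sub_const 1).pow 2
      refine this.congr_deriv ?_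
      simp [id_eq]
    simpa using h.const_mul 3
  have := h3.sub h4
  refine this.congr_deriv ?_
  ring

private lemma g_cont : ContinuousOn
    (fun y : ℝ => (2 * y + 4) * (y * Real.log y - y + 1) - 3 * (y - 1) ^ 2) (Set.Ioi 0) := by
  have hlog : ContinuousOn Real.log (Set.Ioi 0) :=
    Real.continuousOn_log.mono (fun x hx => ne_of_gt hx)
  fun_prop

private lemma key_ineq {x : ℝ} (hx : 0 ≤ x) :
    3 * (x - 1) ^ 2 ≤ (2 * x + 4) * (x * Real.log x - x + 1) := by
  rcases eq_or_lt_of_le hx with h | h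
  · rw [← h]; norm_num
  set g : ℝ → ℝ := fun y => (2 * y + 4) * (y * Real.log y - y + 1) - 3 * (y - 1) ^ 2 with hg
  have hg1 : g 1 = 0 := by simp [hg]
  have hgoal : 0 ≤ g x → 3 * (x - 1) ^ 2 ≤ (2 * x + 4) * (x * Real.log x - x + 1) := by
    intro h0; simp only [hg] at h0; linarith
  apply hgoal
  rcases le_total 1 x with hx1 | hx1
  · have hmono : MonotoneOn g (Set.Ici 1) := by
      apply monotoneOn_of_deriv_nonneg (convex_Ici 1)
      · exact g_cont.mono (fun y hy => Set.mem_Ioi.mpr (lt_of_lt_of_le one_pos (Set.mem_Ici.mp hy)))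
      · intro y hy
        rw [interior_Ici] at hy
        exact (g_hasDeriv (lt_trans one_pos hy)).differentiableAt.differentiableWithinAt
      · intro y hy
        rw [interior_Ici] at hy
        rw [(g_hasDeriv (lt_trans one_pos hy)).deriv]
        have := phi_sign_ge hy.le
        linarith
    have := hmono (Set.mem_Ici.mpr le_rfl) (Set.mem_Ici.mpr hx1) hx1
    linarith [hg1 ▸ this]
  · have hanti : AntitoneOn g (Set.Ioc 0 1) := by
      apply antitoneOn_of_deriv_nonpos (convex_Ioc 0 1)
      · exact g_cont.mono (fun y hy => hy.1)
      · intro y hy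
        rw [interior_Ioc] at hy
        exact (g_hasDeriv hy.1).differentiableAt.differentiableWithinAt
      · intro y hy
        rw [interior_Ioc] at hy
        rw [(g_hasDeriv hy.1).deriv]
        have := phi_sign_le hy.1 hy.2.le
        linarith
    have := hanti (Set.mem_Ioc.mpr ⟨h, hx1⟩) (Set.mem_Ioc.mpr ⟨one_pos, le_rfl⟩) hx1
    linarith [hg1 ▸ this]

private lemma pinsker' {Ω : Type*} [MeasurableSpace Ω] (μ ν : Measure Ω)
    [IsProbabilityMeasure μ] [IsProbabilityMeasure ν]
    (hμν : μ ≪ ν) (hint : Integrable (llr μ ν) μ)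
    {d : ℝ} (hd : 0 < d) (hD : ∫ x, llr μ ν x ∂μ ≤ d ^ 2 / 2) :
    2 * tvDist μ ν ≤ d := by
  set f : Ω → ℝ := fun x => (μ.rnDeriv ν x).toReal with hf_def
  have hf_nonneg : ∀ x, 0 ≤ f x := fun x => ENNReal.toReal_nonneg
  have hf_int : Integrable f ν := Measure.integrable_toReal_rnDeriv
  have hf_one : ∫ x, f x ∂ν = 1 := by
    rw [hf_def, Measure.integral_toReal_rnDeriv hμν]; simp
  have hfl_int : Integrable (fun x => f x * Real.log (f x)) ν := by
    have := (integrable_rnDeriv_smul_iff (f := llr μ ν) hμν).mpr hint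
    simpa [llr, smul_eq_mul] using this
  have hfl_eq : ∫ x, f x * Real.log (f x) ∂ν = ∫ x, llr μ ν x ∂μ := by
    have := integral_rnDeriv_smul (f := llr μ ν) hμν
    simpa [llr, smul_eq_mul] using this
  set H : Ω → ℝ := fun x => f x * Real.log (f x) - f x + 1 with hH_def
  have hH_int : Integrable H ν := (hfl_int.sub hf_int).add (integrable_const 1)
  have hH_integral : ∫ x, H x ∂ν ≤ d ^ 2 / 2 := by
    have h1 : Integrable (fun x => f x * Real.log (f x) - f x) ν := hfl_int.sub hf_int
    have h2 : ∫ x, H x ∂ν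
        = ∫ x, (f x * Real.log (f x) - f x) ∂ν + ∫ _x, (1 : ℝ) ∂ν :=
      integral_add h1 (integrable_const 1)
    have h3 : ∫ x, (f x * Real.log (f x) - f x) ∂ν
        = ∫ x, f x * Real.log (f x) ∂ν - ∫ x, f x ∂ν := integral_sub hfl_int hf_int
    rw [h2, h3, hf_one, hfl_eq]
    simp only [integral_const, measure_univ, ENNReal.toReal_one, probReal_univ, smul_eq_mul, one_mul]
    linarith
  -- pointwise bound
  have hpt : ∀ x, |f x - 1| ≤ d / 12 * (2 * f x + 4) + H x / d := by
    intro x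
    have hk := key_ineq (hf_nonneg x)
    have h2 : (0 : ℝ) < 2 * f x + 4 := by nlinarith [hf_nonneg x]
    have h9 : 9 * (f x - 1) ^ 2 ≤ 3 * (2 * f x + 4) * H x := by
      simp only [hH_def]; nlinarith [hk]
    have hchain : 3 * d * (2 * f x + 4) * |f x - 1|
        ≤ 3 * d * (2 * f x + 4) * (d / 12 * (2 * f x + 4) + H x / d) := by
      have hrhs : 3 * d * (2 * f x + 4) * (d / 12 * (2 * f x + 4) + H x / d)
          = (d / 2) ^ 2 * (2 * f x + 4) ^ 2 + 3 * (2 * f x + 4) * H x := by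
        field_simp; ring
      have hamgm : 3 * d * (2 * f x + 4) * |f x - 1|
          ≤ (d / 2) ^ 2 * (2 * f x + 4) ^ 2 + 9 * (f x - 1) ^ 2 := by
        nlinarith [sq_nonneg (d / 2 * (2 * f x + 4) - 3 * |f x - 1|), sq_abs (f x - 1),
          abs_nonneg (f x - 1)]
      rw [hrhs]; linarith
    have hpos : (0 : ℝ) < 3 * d * (2 * f x + 4) := by positivity
    exact le_of_mul_le_mul_left hchain hpos
  have habs_int : Integrable (fun x => |f x - 1|) ν := (hf_int.sub (integrable_const 1)).abs
  have hrhs_int : Integrable (fun x => d / 12 * (2 * f x + 4) + H x / d) ν :=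
    (((hf_int.const_mul 2).add (integrable_const 4)).const_mul (d / 12)).add (hH_int.div_const d)
  have hint_le : ∫ x, |f x - 1| ∂ν ≤ d := by
    have h1 := integral_mono habs_int hrhs_int hpt
    have ha : Integrable (fun x => d / 12 * (2 * f x + 4)) ν :=
      ((hf_int.const_mul 2).add (integrable_const 4)).const_mul (d / 12)
    have hb : Integrable (fun x => H x / d) ν := hH_int.div_const d
    have h2 : ∫ x, (d / 12 * (2 * f x + 4) + H x / d) ∂ν
        = ∫ x, d / 12 * (2 * f x + 4) ∂ν + ∫ x, H x / d ∂ν := integral_add ha hb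
    have h3 : ∫ x, d / 12 * (2 * f x + 4) ∂ν = d / 12 * ∫ x, (2 * f x + 4) ∂ν :=
      integral_const_mul _ _
    have h4 : ∫ x, (2 * f x + 4) ∂ν = 2 * (∫ x, f x ∂ν) + 4 := by
      rw [integral_add (hf_int.const_mul 2) (integrable_const 4), integral_const_mul]
      simp [measure_univ]
    have h5 : ∫ x, H x / d ∂ν = (∫ x, H x ∂ν) / d := integral_div _ _
    rw [h2, h3, h4, h5, hf_one] at h1
    have h3 : (∫ x, H x ∂ν) / d ≤ d / 2 := by
      rw [div_le_iff₀ hd]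
      calc ∫ x, H x ∂ν ≤ d ^ 2 / 2 := hH_integral
        _ = d / 2 * d := by ring
    calc ∫ x, |f x - 1| ∂ν ≤ d / 12 * (2 * 1 + 4) + (∫ x, H x ∂ν) / d := h1
      _ ≤ d / 2 + d / 2 := by linarith
      _ = d := by ring
  -- TV bound
  have hTV : ∀ B : Set Ω, MeasurableSet B → |(μ B).toReal - (ν B).toReal| ≤ d / 2 := by
    intro B hB
    have hsub_int : Integrable (fun x => f x - 1) ν := hf_int.sub (integrable_const 1)
    have hset : ∀ C : Set Ω, MeasurableSet C →
        (μ C).toReal - (ν C).toReal = ∫ x in C, (f x - 1) ∂ν := by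
      intro C hC
      rw [integral_sub hf_int.integrableOn (integrable_const 1).integrableOn,
        Measure.setIntegral_toReal_rnDeriv hμν C]
      simp [Measure.restrict_apply_univ]
      rfl
    have hzero : ∫ x in B, (f x - 1) ∂ν + ∫ x in Bᶜ, (f x - 1) ∂ν = 0 := by
      rw [integral_add_compl hB hsub_int, integral_sub hf_int (integrable_const 1), hf_one]
      simp
    have habs1 : |∫ x in B, (f x - 1) ∂ν| ≤ ∫ x in B, |f x - 1| ∂ν := by
      simpa [Real.norm_eq_abs] using
        norm_integral_le_integral_norm (μ := ν.restrict B) (f := fun x => f x - 1)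
    have habs2 : |∫ x in Bᶜ, (f x - 1) ∂ν| ≤ ∫ x in Bᶜ, |f x - 1| ∂ν := by
      simpa [Real.norm_eq_abs] using
        norm_integral_le_integral_norm (μ := ν.restrict Bᶜ) (f := fun x => f x - 1)
    have hsplit : ∫ x in B, |f x - 1| ∂ν + ∫ x in Bᶜ, |f x - 1| ∂ν = ∫ x, |f x - 1| ∂ν :=
      integral_add_compl hB habs_int
    have heq : |∫ x in Bᶜ, (f x - 1) ∂ν| = |∫ x in B, (f x - 1) ∂ν| := by
      rw [show ∫ x in Bᶜ, (f x - 1) ∂ν = -∫ x in B, (f x - 1) ∂ν by linarith, abs_neg]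
    rw [hset B hB]
    have : 2 * |∫ x in B, (f x - 1) ∂ν| ≤ ∫ x, |f x - 1| ∂ν := by
      rw [← hsplit]; linarith [heq ▸ habs2]
    linarith
  have hne : Nonempty {A : Set Ω // MeasurableSet A} := ⟨⟨∅, MeasurableSet.empty⟩⟩
  have : tvDist μ ν ≤ d / 2 := ciSup_le fun A => hTV A.1 A.2
  linarith

private lemma tvDist_comm' {Ω : Type*} [MeasurableSpace Ω] (μ ν : Measure Ω) :
    tvDist μ ν = tvDist ν μ := by
  unfold tvDist
  congr 1
  funext A
  rw [abs_sub_comm]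

private lemma klDiv_le_real {Ω : Type*} [MeasurableSpace Ω] {μ ν : Measure Ω} {c : ℝ}
    (h : klDiv μ ν ≤ (c : EReal)) :
    μ ≪ ν ∧ Integrable (llr μ ν) μ ∧ ∫ x, llr μ ν x ∂μ ≤ c := by
  by_cases hc : μ ≪ ν ∧ Integrable (llr μ ν) μ
  · refine ⟨hc.1, hc.2, ?_⟩
    rw [klDiv, if_pos hc] at h
    exact_mod_cast h
  · rw [klDiv, if_neg hc] at h
    exact absurd h (EReal.coe_lt_top c).not_ge

private lemma klDiv_self' {Ω : Type*} [MeasurableSpace Ω] (μ : Measure Ω) [IsFiniteMeasure μ] :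
    klDiv μ μ = ((0 : ℝ) : EReal) := by
  have hll : llr μ μ =ᵐ[μ] fun _ => (0 : ℝ) := by
    filter_upwards [Measure.rnDeriv_self μ] with x hx
    simp [llr, hx]
  have hint : Integrable (llr μ μ) μ := (integrable_const (0 : ℝ)).congr hll.symm
  rw [klDiv, if_pos ⟨Measure.AbsolutelyContinuous.rfl, hint⟩]
  congr 1
  rw [integral_congr_ae hll]
  simp

private lemma pinsker_kl {Ω : Type*} [MeasurableSpace Ω] (μ ν : Measure Ω)
    [IsProbabilityMeasure μ] [IsProbabilityMeasure ν] {d : ℝ} (hd : 0 < d)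
    (h : klDiv μ ν ≤ ((d ^ 2 / 2 : ℝ) : EReal)) : 2 * tvDist μ ν ≤ d := by
  obtain ⟨hac, hint, hD⟩ := klDiv_le_real h
  exact pinsker' μ ν hac hint hd hD

/-- Proposition 12 (L1/total-variation uncertainty class): (i) Pinsker's inequality in both
orders; (ii) `P₁ = sup{μ(A) : 2·TV(μ,μ0) ≤ d}` dominates both relative-entropy compound
outages at radius `d²/2`; (iii) `P₁ ≥ 1 − e^{−d²/2} + e^{−d²/2}·ε ≥ 1 − e^{−d²/2}`. -/
theorem stmt_19 {Ω : Type*} [MeasurableSpace Ω] [MeasurableSingletonClass Ω]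
    (μ0 : Measure Ω) [IsProbabilityMeasure μ0] (A : Set Ω) (hA : MeasurableSet A)
    (d : ℝ) (hd : 0 < d) (h0 : Ω) (hh0 : h0 ∈ A) (hsing : μ0 {h0} = 0) :
    (∀ μ : Measure Ω, IsProbabilityMeasure μ →
      (klDiv μ0 μ ≤ ((d ^ 2 / 2 : ℝ) : EReal) → 2 * tvDist μ μ0 ≤ d) ∧
      (klDiv μ μ0 ≤ ((d ^ 2 / 2 : ℝ) : EReal) → 2 * tvDist μ μ0 ≤ d)) ∧
    max (sSup {p : ℝ | ∃ μ : Measure Ω, IsProbabilityMeasure μ ∧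
          klDiv μ μ0 ≤ ((d ^ 2 / 2 : ℝ) : EReal) ∧ p = (μ A).toReal})
        (sSup {p : ℝ | ∃ μ : Measure Ω, IsProbabilityMeasure μ ∧
          klDiv μ0 μ ≤ ((d ^ 2 / 2 : ℝ) : EReal) ∧ p = (μ A).toReal})
      ≤ sSup {p : ℝ | ∃ μ : Measure Ω, IsProbabilityMeasure μ ∧
          2 * tvDist μ μ0 ≤ d ∧ p = (μ A).toReal} ∧
    1 - Real.exp (-(d ^ 2 / 2)) + Real.exp (-(d ^ 2 / 2)) * (μ0 A).toReal
      ≤ sSup {p : ℝ | ∃ μ : Measure Ω, IsProbabilityMeasure μ ∧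
          2 * tvDist μ μ0 ≤ d ∧ p = (μ A).toReal} ∧
    1 - Real.exp (-(d ^ 2 / 2))
      ≤ 1 - Real.exp (-(d ^ 2 / 2)) + Real.exp (-(d ^ 2 / 2)) * (μ0 A).toReal := by
  have hhalf : (0 : ℝ) < d ^ 2 / 2 := by positivity
  -- part (i)
  have hpin : ∀ μ : Measure Ω, IsProbabilityMeasure μ →
      (klDiv μ0 μ ≤ ((d ^ 2 / 2 : ℝ) : EReal) → 2 * tvDist μ μ0 ≤ d) ∧
      (klDiv μ μ0 ≤ ((d ^ 2 / 2 : ℝ) : EReal) → 2 * tvDist μ μ0 ≤ d) := by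
    intro μ hμ
    haveI := hμ
    refine ⟨fun h => ?_, fun h => ?_⟩
    · rw [tvDist_comm']
      exact pinsker_kl μ0 μ hd h
    · exact pinsker_kl μ μ0 hd h
  -- boundedness of the TV-sup set
  have hbddP1 : BddAbove {p : ℝ | ∃ μ : Measure Ω, IsProbabilityMeasure μ ∧
      2 * tvDist μ μ0 ≤ d ∧ p = (μ A).toReal} := by
    refine ⟨1, fun p hp => ?_⟩
    obtain ⟨μ, hμ, _, rfl⟩ := hp
    haveI := hμ
    calc (μ A).toReal ≤ (μ Set.univ).toReal :=
          ENNReal.toReal_mono (measure_ne_top μ _) (measure_mono (Set.subset_univ A))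
      _ = 1 := by simp [measure_univ]
  have hself : klDiv μ0 μ0 ≤ ((d ^ 2 / 2 : ℝ) : EReal) := by
    rw [klDiv_self']
    exact_mod_cast hhalf.le
  refine ⟨hpin, ?_, ?_, ?_⟩
  · -- part (ii)
    have hne1 : Set.Nonempty {p : ℝ | ∃ μ : Measure Ω, IsProbabilityMeasure μ ∧
        klDiv μ μ0 ≤ ((d ^ 2 / 2 : ℝ) : EReal) ∧ p = (μ A).toReal} :=
      ⟨(μ0 A).toReal, μ0, inferInstance, hself, rfl⟩
    have hne2 : Set.Nonempty {p : ℝ | ∃ μ : Measure Ω, IsProbabilityMeasure μ ∧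
        klDiv μ0 μ ≤ ((d ^ 2 / 2 : ℝ) : EReal) ∧ p = (μ A).toReal} :=
      ⟨(μ0 A).toReal, μ0, inferInstance, hself, rfl⟩
    have hsub1 : {p : ℝ | ∃ μ : Measure Ω, IsProbabilityMeasure μ ∧
        klDiv μ μ0 ≤ ((d ^ 2 / 2 : ℝ) : EReal) ∧ p = (μ A).toReal}
        ⊆ {p : ℝ | ∃ μ : Measure Ω, IsProbabilityMeasure μ ∧
        2 * tvDist μ μ0 ≤ d ∧ p = (μ A).toReal} := by
      rintro p ⟨μ, hμ, hkl, hp⟩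
      exact ⟨μ, hμ, (hpin μ hμ).2 hkl, hp⟩
    have hsub2 : {p : ℝ | ∃ μ : Measure Ω, IsProbabilityMeasure μ ∧
        klDiv μ0 μ ≤ ((d ^ 2 / 2 : ℝ) : EReal) ∧ p = (μ A).toReal}
        ⊆ {p : ℝ | ∃ μ : Measure Ω, IsProbabilityMeasure μ ∧
        2 * tvDist μ μ0 ≤ d ∧ p = (μ A).toReal} := by
      rintro p ⟨μ, hμ, hkl, hp⟩
      exact ⟨μ, hμ, (hpin μ hμ).1 hkl, hp⟩
    exact max_le (csSup_le_csSup hbddP1 hne1 hsub1) (csSup_le_csSup hbddP1 hne2 hsub2)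
  · -- part (iii)
    set b : ℝ := Real.exp (-(d ^ 2 / 2)) with hb_def
    have hb_pos : 0 < b := Real.exp_pos _
    have hb_le : b ≤ 1 := Real.exp_le_one_iff.mpr (by linarith)
    set a : ℝ := 1 - b with ha_def
    have ha_nonneg : 0 ≤ a := by simp only [ha_def]; linarith
    set μ1 : Measure Ω := (ENNReal.ofReal a) • Measure.dirac h0 + (ENNReal.ofReal b) • μ0
      with hμ1_def
    haveI hμ1_prob : IsProbabilityMeasure μ1 := by
      constructor
      have h1 : μ1 Set.univ = ENNReal.ofReal a + ENNReal.ofReal b := by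
        simp [hμ1_def, measure_univ]
      rw [h1, ← ENNReal.ofReal_add ha_nonneg hb_pos.le]
      have : a + b = 1 := by simp [ha_def]
      rw [this, ENNReal.ofReal_one]
    have hb_ne : ENNReal.ofReal b ≠ 0 := (ENNReal.ofReal_pos.mpr hb_pos).ne'
    have hac : μ0 ≪ μ1 := by
      refine Measure.AbsolutelyContinuous.mk fun s hs hμ1s => ?_
      have h1 : (ENNReal.ofReal a) * Measure.dirac h0 s + (ENNReal.ofReal b) * μ0 s = 0 := by
        simpa [hμ1_def] using hμ1s
      have h2 : (ENNReal.ofReal b) * μ0 s = 0 := by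
        rcases add_eq_zero.mp h1 with ⟨_, h⟩
        exact h
      rcases mul_eq_zero.mp h2 with h | h
      · exact absurd h hb_ne
      · exact h
    set c : ENNReal := (ENNReal.ofReal b)⁻¹ with hc_def
    set g : Ω → ENNReal := Set.indicator {h0}ᶜ (fun _ => c) with hg_def
    have hg_meas : Measurable g :=
      measurable_const.indicator (MeasurableSet.singleton h0).compl
    have hwd : μ1.withDensity g = μ0 := by
      ext s hs
      rw [withDensity_apply _ hs, hg_def,
        lintegral_indicator (MeasurableSet.singleton h0).compl _]
      rw [setLIntegral_const, Measure.restrict_apply (MeasurableSet.singleton h0).compl]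
      have hd0 : Measure.dirac h0 ({h0}ᶜ ∩ s) = 0 := by
        rw [Measure.dirac_apply' _ ((MeasurableSet.singleton h0).compl.inter hs)]
        simp
      have hμ0' : μ0 ({h0}ᶜ ∩ s) = μ0 s := by
        rw [Set.inter_comm, ← Set.diff_eq]
        exact measure_diff_null hsing
      have hμ1' : μ1 ({h0}ᶜ ∩ s) = ENNReal.ofReal b * μ0 s := by
        simp [hμ1_def, hd0, hμ0']
      rw [hμ1', ← mul_assoc, hc_def, ENNReal.inv_mul_cancel hb_ne ENNReal.ofReal_ne_top, one_mul]
    have hrn : g =ᵐ[μ1] μ0.rnDeriv μ1 :=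
      Measure.eq_rnDeriv hg_meas Measure.MutuallySingular.zero_left
        (by rw [hwd, zero_add])
    have hrn0 : g =ᵐ[μ0] μ0.rnDeriv μ1 := hrn.filter_mono hac.ae_le
    have hae_ne : ∀ᵐ x ∂μ0, x ≠ h0 := by
      rw [ae_iff]
      simpa using hsing
    have hllr : llr μ0 μ1 =ᵐ[μ0] fun _ => d ^ 2 / 2 := by
      filter_upwards [hae_ne, hrn0] with x hxne hxg
      rw [llr, ← hxg, hg_def, Set.indicator_of_mem (by simpa using hxne), hc_def,
        ENNReal.toReal_inv, ENNReal.toReal_ofReal hb_pos.le, Real.log_inv, hb_def,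
        Real.log_exp]
      ring
    have hint1 : Integrable (llr μ0 μ1) μ0 := (integrable_const _).congr hllr.symm
    have hD1 : ∫ x, llr μ0 μ1 x ∂μ0 = d ^ 2 / 2 := by
      rw [integral_congr_ae hllr]
      simp [measure_univ]
    have hkl1 : klDiv μ0 μ1 ≤ ((d ^ 2 / 2 : ℝ) : EReal) := by
      rw [klDiv, if_pos ⟨hac, hint1⟩, hD1]
    have htv1 : 2 * tvDist μ1 μ0 ≤ d := (hpin μ1 hμ1_prob).1 hkl1
    have hμ1A : (μ1 A).toReal = a + b * (μ0 A).toReal := by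
      have hdirac : Measure.dirac h0 A = 1 := by
        rw [Measure.dirac_apply' h0 hA]
        simp [hh0]
      have h1 : μ1 A = ENNReal.ofReal a + ENNReal.ofReal b * μ0 A := by
        simp [hμ1_def, hdirac]
      rw [h1, ENNReal.toReal_add ENNReal.ofReal_ne_top
        (ENNReal.mul_ne_top ENNReal.ofReal_ne_top (measure_ne_top μ0 A)),
        ENNReal.toReal_mul, ENNReal.toReal_ofReal ha_nonneg, ENNReal.toReal_ofReal hb_pos.le]
    have hmem : (μ1 A).toReal ∈ {p : ℝ | ∃ μ : Measure Ω, IsProbabilityMeasure μ ∧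
        2 * tvDist μ μ0 ≤ d ∧ p = (μ A).toReal} := ⟨μ1, hμ1_prob, htv1, rfl⟩
    have := le_csSup hbddP1 hmem
    rw [hμ1A] at this
    calc 1 - b + b * (μ0 A).toReal = a + b * (μ0 A).toReal := by rw [ha_def]
      _ ≤ _ := this
  · have : 0 ≤ Real.exp (-(d ^ 2 / 2)) * (μ0 A).toReal := by positivity
    linarith
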